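/- Let E be a real inner product space and let f_1,…,f_n : E → ℝ be differentiable with P(w) = (1/n) ∑_{i=1}^n f_i(w). Assume each gradient map is L-Lipschitz, i.e. ‖∇f_i(a) − ∇f_i(b)‖ ≤ L‖a − b‖ for all a, b and all i, and assume ∇P(w*) = 0. Let D ⊆ {1,…,n} be a block of size q, let w_t ∈ E, set z = ∇P(w_t), and let c ≥ 0. Then for every u ∈ E: (1/q) ∑_{i∈D} ‖∇f_i(u) − ∇f_i(w_t) + z + c·(u − w_t)‖² ≤ 3(L² + c²)‖u − w_t‖² + 3L²‖w_t − w*‖². -/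

import Mathlib

open scoped InnerProductSpace

private lemma three_term_sq {E : Type*} [NormedAddCommGroup E] (x y w : E) :
    ‖x + y + w‖ ^ 2 ≤ 3 * (‖x‖ ^ 2 + ‖y‖ ^ 2 + ‖w‖ ^ 2) := by
  have h1 : ‖x + y + w‖ ≤ ‖x‖ + ‖y‖ + ‖w‖ :=
    (norm_add_le _ _).trans (by gcongr; exact norm_add_le _ _)
  have h0 : (0:ℝ) ≤ ‖x + y + w‖ := norm_nonneg _
  nlinarith [norm_nonneg x, norm_nonneg y, norm_nonneg w, sq_nonneg (‖x‖ - ‖y‖),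
    sq_nonneg (‖x‖ - ‖w‖), sq_nonneg (‖y‖ - ‖w‖)]

private lemma grad_avg {E : Type*} [NormedAddCommGroup E] [InnerProductSpace ℝ E]
    [CompleteSpace E] (n : ℕ) (f : Fin n → E → ℝ) (hf : ∀ i, Differentiable ℝ (f i))
    (w : E) :
    gradient (fun w => (1 / n : ℝ) * ∑ i, f i w) w
      = (1 / n : ℝ) • ∑ i, gradient (f i) w := by
  have hdiff : DifferentiableAt ℝ (fun w => ∑ i, f i w) w :=
    DifferentiableAt.fun_sum fun i _ => (hf i).differentiableAt
  have h1 : fderiv ℝ (fun w => (1 / n : ℝ) * ∑ i, f i w) w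
      = (1 / n : ℝ) • fderiv ℝ (fun w => ∑ i, f i w) w := fderiv_const_mul hdiff _
  have h2 : fderiv ℝ (fun w => ∑ i, f i w) w = ∑ i, fderiv ℝ (f i) w :=
    fderiv_fun_sum fun i _ => (hf i).differentiableAt
  simp only [gradient, h1, h2, map_smul, map_sum]

theorem scope_variance_bound
    {E : Type*} [NormedAddCommGroup E] [InnerProductSpace ℝ E] [CompleteSpace E]
    (n : ℕ) (f : Fin n → E → ℝ) (hf : ∀ i, Differentiable ℝ (f i))
    (P : E → ℝ) (hP : P = fun w => (1 / n : ℝ) * ∑ i, f i w)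
    (L : ℝ)
    (hL : ∀ i, ∀ a b : E, ‖gradient (f i) a - gradient (f i) b‖ ≤ L * ‖a - b‖)
    (wstar : E) (hstar : gradient P wstar = 0)
    (D : Finset (Fin n)) (hD : D.Nonempty) (q : ℕ) (hq : (q : ℕ) = D.card)
    (wt z : E) (hz : z = gradient P wt) (c : ℝ) (hc : 0 ≤ c) (u : E) :
    (1 / q : ℝ) * ∑ i ∈ D,
        ‖gradient (f i) u - gradient (f i) wt + z + c • (u - wt)‖ ^ 2
      ≤ 3 * (L ^ 2 + c ^ 2) * ‖u - wt‖ ^ 2 + 3 * L ^ 2 * ‖wt - wstar‖ ^ 2 := by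
  obtain ⟨i0, hi0⟩ := hD
  have hn : 0 < n := i0.pos
  have hq0 : 0 < q := by rw [hq]; exact Finset.card_pos.mpr ⟨i0, hi0⟩
  -- gradient of P
  have hgrad : ∀ w, gradient P w = (1 / n : ℝ) • ∑ i, gradient (f i) w := by
    intro w; rw [hP]; exact grad_avg n f hf w
  -- bound on ‖z‖
  have hzz : ‖z‖ ≤ L * ‖wt - wstar‖ := by
    have : z = gradient P wt - gradient P wstar := by rw [hstar, hz, sub_zero]
    rw [this, hgrad, hgrad, ← smul_sub, ← Finset.sum_sub_distrib]
    calc ‖(1 / n : ℝ) • ∑ i, (gradient (f i) wt - gradient (f i) wstar)‖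
        = (1 / n : ℝ) * ‖∑ i, (gradient (f i) wt - gradient (f i) wstar)‖ := by
          rw [norm_smul]; simp [abs_of_nonneg, Nat.cast_nonneg]
      _ ≤ (1 / n : ℝ) * ∑ i : Fin n, (L * ‖wt - wstar‖) := by
          apply mul_le_mul_of_nonneg_left _ (by positivity : (0:ℝ) ≤ 1 / n)
          exact (norm_sum_le _ _).trans (Finset.sum_le_sum fun i _ => hL i wt wstar)
      _ = L * ‖wt - wstar‖ := by
          rw [Finset.sum_const, Finset.card_univ, Fintype.card_fin, nsmul_eq_mul]
          field_simp
  set B := 3 * (L ^ 2 + c ^ 2) * ‖u - wt‖ ^ 2 + 3 * L ^ 2 * ‖wt - wstar‖ ^ 2 with hB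
  have hterm : ∀ i ∈ D,
      ‖gradient (f i) u - gradient (f i) wt + z + c • (u - wt)‖ ^ 2 ≤ B := by
    intro i _
    have h1 := hL i u wt
    have h2 : ‖c • (u - wt)‖ = c * ‖u - wt‖ := by
      rw [norm_smul, Real.norm_eq_abs, abs_of_nonneg hc]
    have h3 := three_term_sq (gradient (f i) u - gradient (f i) wt) z (c • (u - wt))
    have h4 : ‖gradient (f i) u - gradient (f i) wt‖ ^ 2 ≤ (L * ‖u - wt‖) ^ 2 := by
      have := norm_nonneg (gradient (f i) u - gradient (f i) wt); nlinarith
    have h5 : ‖z‖ ^ 2 ≤ (L * ‖wt - wstar‖) ^ 2 := by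
      have := norm_nonneg z; nlinarith
    rw [hB]; rw [h2] at h3; nlinarith
  have hsum : ∑ i ∈ D,
      ‖gradient (f i) u - gradient (f i) wt + z + c • (u - wt)‖ ^ 2 ≤ (q : ℝ) * B := by
    calc _ ≤ ∑ _i ∈ D, B := Finset.sum_le_sum hterm
      _ = (q : ℝ) * B := by rw [Finset.sum_const, hq, nsmul_eq_mul]
  have hqpos : (0:ℝ) < q := by exact_mod_cast hq0
  calc (1 / q : ℝ) * ∑ i ∈ D,
        ‖gradient (f i) u - gradient (f i) wt + z + c • (u - wt)‖ ^ 2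
      ≤ (1 / q : ℝ) * ((q : ℝ) * B) := by
        apply mul_le_mul_of_nonneg_left hsum; positivity
    _ = B := by field_simp
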